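/- Let B → K and C → K be ring homomorphisms with C → K surjective, and let A = B ×_K C be the fiber product ring. Then the natural map B ⊗_A C → K is an isomorphism. -/
import Mathlib


open TensorProduct

/-- Ferrand fiber product: `B ⊗_A C → K` is an isomorphism when `A = B ×_K C`
and `C → K` is surjective. -/
theorem ferrand_tensor_iso
    (A B C K : Type*) [CommRing A] [CommRing B] [CommRing C] [CommRing K]
    [Algebra A B] [Algebra A C] [Algebra A K] [Algebra B K] [Algebra C K]
    [IsScalarTower A B K] [IsScalarTower A C K]
    (hsurj : Function.Surjective (algebraMap C K))
    (hpull : ∀ (b : B) (c : C), algebraMap B K b = algebraMap C K c →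
      ∃! a : A, algebraMap A B a = b ∧ algebraMap A C a = c) :
    Function.Bijective
      (Algebra.TensorProduct.productMap
        (IsScalarTower.toAlgHom A B K) (IsScalarTower.toAlgHom A C K)) := by
  set f := Algebra.TensorProduct.productMap
      (IsScalarTower.toAlgHom A B K) (IsScalarTower.toAlgHom A C K) with hf
  -- every element of B ⊗[A] C is of the form 1 ⊗ c
  have key : ∀ x : B ⊗[A] C, ∃ c : C, x = 1 ⊗ₜ[A] c := by
    intro x
    induction x using TensorProduct.induction_on with
    | zero => exact ⟨0, by simp⟩
    | tmul b c =>
      obtain ⟨c₀, hc₀⟩ := hsurj (algebraMap B K b)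
      obtain ⟨a, ⟨ha1, ha2⟩, -⟩ := hpull b c₀ hc₀.symm
      refine ⟨algebraMap A C a * c, ?_⟩
      rw [← ha1, Algebra.algebraMap_eq_smul_one, TensorProduct.smul_tmul,
        Algebra.smul_def]
    | add x y hx hy =>
      obtain ⟨cx, hcx⟩ := hx
      obtain ⟨cy, hcy⟩ := hy
      exact ⟨cx + cy, by rw [hcx, hcy, TensorProduct.tmul_add]⟩
  have hker : ∀ x : B ⊗[A] C, f x = 0 → x = 0 := by
    intro x hx
    obtain ⟨c, rfl⟩ := key x
    have hc : algebraMap C K c = 0 := by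
      simpa [hf, Algebra.TensorProduct.productMap_apply_tmul] using hx
    obtain ⟨a, ⟨ha1, ha2⟩, -⟩ := hpull 0 c (by simp [hc])
    calc (1 : B) ⊗ₜ[A] c = 1 ⊗ₜ[A] (algebraMap A C a) := by rw [ha2]
      _ = (algebraMap A B a) ⊗ₜ[A] 1 := by
          rw [Algebra.algebraMap_eq_smul_one, Algebra.algebraMap_eq_smul_one,
            TensorProduct.smul_tmul]
      _ = 0 := by rw [ha1, TensorProduct.zero_tmul]
  constructor
  · exact (injective_iff_map_eq_zero f).mpr hker
  · intro k
    obtain ⟨c, hc⟩ := hsurj k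
    exact ⟨1 ⊗ₜ[A] c, by
      simp [hf, Algebra.TensorProduct.productMap_apply_tmul, hc]⟩
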